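/- Consider the quadratic two-player game where player 1 minimizes over x ∈ ℝ^m the function xᵀa + xᵀB y + (1/(2η)) xᵀx (for fixed y) and player 2 minimizes over y ∈ ℝ^n the function yᵀc + yᵀBᵀ(−x) + (1/(2η)) yᵀy (for fixed x), with η > 0 and Id + η²BBᵀ invertible. Then the pair (x*, y*) with x* = −η(Id + η²BBᵀ)⁻¹(a − ηBc) and y* = −η(Id + η²BᵀB)⁻¹(c + ηBᵀa) is the unique pair of strategies such that x* is the minimizer of player 1's cost given y* and y* is the minimizer of player 2's cost given x*. -/
import Mathlib

open Matrix

/-- Minimizing a quadratic `x ⬝ d + (1/(2η)) ‖x‖²` : unique minimizer is `-η • d`. -/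
lemma quadmin {k : ℕ} {η : ℝ} (hη : 0 < η) (d x' : Fin k → ℝ) :
    (∀ x : Fin k → ℝ,
        x' ⬝ᵥ d + (1 / (2 * η)) * (x' ⬝ᵥ x') ≤ x ⬝ᵥ d + (1 / (2 * η)) * (x ⬝ᵥ x)) ↔
      x' = -η • d := by
  have key : ∀ x : Fin k → ℝ, x ⬝ᵥ d + (1 / (2 * η)) * (x ⬝ᵥ x)
      = (1 / (2 * η)) * ((x + η • d) ⬝ᵥ (x + η • d)) - (η / 2) * (d ⬝ᵥ d) := by
    intro x
    have h1 : (x + η • d) ⬝ᵥ (x + η • d)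
        = x ⬝ᵥ x + 2 * η * (x ⬝ᵥ d) + η ^ 2 * (d ⬝ᵥ d) := by
      simp only [dotProduct_add, add_dotProduct, smul_dotProduct, dotProduct_smul,
        dotProduct_comm d x, smul_eq_mul]
      ring
    rw [h1]; field_simp; ring
  have h0 : (-η • d + η • d : Fin k → ℝ) = 0 := by
    simp [neg_smul]
  have hpos : 0 < 1 / (2 * η) := by positivity
  constructor
  · intro h
    have h2 := h (-η • d)
    rw [key, key, h0, zero_dotProduct] at h2
    have hS0 : 0 ≤ (x' + η • d) ⬝ᵥ (x' + η • d) :=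
      Finset.sum_nonneg fun i _ => mul_self_nonneg _
    have hle : (x' + η • d) ⬝ᵥ (x' + η • d) ≤ 0 := by nlinarith
    have hz : x' + η • d = 0 := dotProduct_self_eq_zero.mp (le_antisymm hle hS0)
    have := eq_neg_of_add_eq_zero_left hz
    rw [neg_smul]; exact this
  · intro h x
    rw [key, key, h, h0, zero_dotProduct]
    have hS0 : 0 ≤ (x + η • d) ⬝ᵥ (x + η • d) :=
      Finset.sum_nonneg fun i _ => mul_self_nonneg _
    nlinarith

/-- zero-sum quadratic-regularized bilinear game, closed-form unique Nash
equilibrium (CGD update). -/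
theorem stmt_3 (m n : ℕ) (a : Fin m → ℝ) (c : Fin n → ℝ)
    (B : Matrix (Fin m) (Fin n) ℝ) (η : ℝ) (hη : 0 < η)
    (hinv : IsUnit ((1 : Matrix (Fin m) (Fin m) ℝ) + η ^ 2 • (B * Bᵀ))) :
    let P1 : (Fin m → ℝ) → (Fin n → ℝ) → ℝ := fun x y =>
      x ⬝ᵥ a + x ⬝ᵥ B.mulVec y + (1 / (2 * η)) * (x ⬝ᵥ x)
    let P2 : (Fin n → ℝ) → (Fin m → ℝ) → ℝ := fun y x =>
      y ⬝ᵥ c + y ⬝ᵥ Bᵀ.mulVec (-x) + (1 / (2 * η)) * (y ⬝ᵥ y)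
    let xstar : Fin m → ℝ :=
      -η • ((1 + η ^ 2 • (B * Bᵀ))⁻¹.mulVec (a - η • B.mulVec c))
    let ystar : Fin n → ℝ :=
      -η • ((1 + η ^ 2 • (Bᵀ * B))⁻¹.mulVec (c + η • Bᵀ.mulVec a))
    ∀ x' : Fin m → ℝ, ∀ y' : Fin n → ℝ,
      ((∀ x, P1 x' y' ≤ P1 x y') ∧ (∀ y, P2 y' x' ≤ P2 y x')) ↔
        (x' = xstar ∧ y' = ystar) := by
  intro P1 P2 xstar ystar x' y'
  set M : Matrix (Fin m) (Fin m) ℝ := 1 + η ^ 2 • (B * Bᵀ) with hM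
  set N : Matrix (Fin n) (Fin n) ℝ := 1 + η ^ 2 • (Bᵀ * B) with hN
  have hdetM : IsUnit M.det := (Matrix.isUnit_iff_isUnit_det M).mp hinv
  have hNdet : N.det = M.det := by
    rw [show N = 1 + Bᵀ * (η ^ 2 • B) by rw [Matrix.mul_smul, hN],
      show M = 1 + (η ^ 2 • B) * Bᵀ by rw [Matrix.smul_mul, hM]]
    exact (Matrix.det_one_add_mul_comm (η ^ 2 • B) Bᵀ).symm
  have hdetN : IsUnit N.det := hNdet ▸ hdetM
  -- the defining equations of xstar and ystar
  have hMx : M.mulVec xstar = -η • (a - η • B.mulVec c) := by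
    show M.mulVec (-η • (M⁻¹.mulVec (a - η • B.mulVec c))) = _
    rw [Matrix.mulVec_smul, Matrix.mulVec_mulVec, Matrix.mul_nonsing_inv M hdetM,
      Matrix.one_mulVec]
  have hNy : N.mulVec ystar = -η • (c + η • Bᵀ.mulVec a) := by
    show N.mulVec (-η • (N⁻¹.mulVec (c + η • Bᵀ.mulVec a))) = _
    rw [Matrix.mulVec_smul, Matrix.mulVec_mulVec, Matrix.mul_nonsing_inv N hdetN,
      Matrix.one_mulVec]
  have hNinj : ∀ u v : Fin n → ℝ, N.mulVec u = N.mulVec v → u = v := by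
    intro u v h
    have := congrArg (fun w => N⁻¹.mulVec w) h
    simpa [Matrix.mulVec_mulVec, Matrix.nonsing_inv_mul N hdetN, Matrix.one_mulVec] using this
  -- expand M, N acting by mulVec
  have hMv : ∀ v : Fin m → ℝ, M.mulVec v = v + η ^ 2 • B.mulVec (Bᵀ.mulVec v) := by
    intro v
    rw [hM, Matrix.add_mulVec, Matrix.one_mulVec, Matrix.smul_mulVec,
      ← Matrix.mulVec_mulVec]
  have hNv : ∀ v : Fin n → ℝ, N.mulVec v = v + η ^ 2 • Bᵀ.mulVec (B.mulVec v) := by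
    intro v
    rw [hN, Matrix.add_mulVec, Matrix.one_mulVec, Matrix.smul_mulVec,
      ← Matrix.mulVec_mulVec]
  -- key identity (ii) : ystar = -η • (c - Bᵀ xstar)
  have hii : ystar = -η • (c - Bᵀ.mulVec xstar) := by
    apply hNinj
    rw [hNy, hNv]
    have hMx' := hMx
    rw [hMv] at hMx'
    have hBx := congrArg (fun v => Bᵀ.mulVec v) hMx'
    simp only [Matrix.mulVec_add, Matrix.mulVec_smul, Matrix.mulVec_sub, Matrix.mulVec_neg,
      smul_add, smul_sub, smul_smul, neg_smul, smul_neg] at hBx ⊢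
    linear_combination (norm := module) (- η : ℝ) • hBx
  -- key identity (i) : xstar = -η • (a + B ystar)
  have hi : xstar = -η • (a + B.mulVec ystar) := by
    rw [hii]
    have hMx' := hMx
    rw [hMv] at hMx'
    simp only [Matrix.mulVec_add, Matrix.mulVec_smul, Matrix.mulVec_sub, Matrix.mulVec_neg,
      smul_add, smul_sub, smul_smul, neg_smul, smul_neg] at hMx' ⊢
    linear_combination (norm := module) hMx'
  -- reduce the Nash condition via the quadratic-minimization lemma
  have unfold1 : ∀ x y, P1 x y = x ⬝ᵥ (a + B.mulVec y) + (1 / (2 * η)) * (x ⬝ᵥ x) := by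
    intro x y
    show x ⬝ᵥ a + x ⬝ᵥ B.mulVec y + (1 / (2 * η)) * (x ⬝ᵥ x) = _
    rw [dotProduct_add]
  have unfold2 : ∀ y x, P2 y x = y ⬝ᵥ (c - Bᵀ.mulVec x) + (1 / (2 * η)) * (y ⬝ᵥ y) := by
    intro y x
    show y ⬝ᵥ c + y ⬝ᵥ Bᵀ.mulVec (-x) + (1 / (2 * η)) * (y ⬝ᵥ y) = _
    rw [dotProduct_sub, Matrix.mulVec_neg, dotProduct_neg, sub_eq_add_neg]
  have hQ1 : (∀ x, P1 x' y' ≤ P1 x y') ↔ x' = -η • (a + B.mulVec y') := by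
    simp only [unfold1]
    exact quadmin hη _ _
  have hQ2 : (∀ y, P2 y' x' ≤ P2 y x') ↔ y' = -η • (c - Bᵀ.mulVec x') := by
    simp only [unfold2]
    exact quadmin hη _ _
  rw [hQ1, hQ2]
  constructor
  · rintro ⟨hx, hy⟩
    -- derive M x' = -η (a - η B c)
    have hx'eq : M.mulVec x' = -η • (a - η • B.mulVec c) := by
      rw [hMv]
      nth_rewrite 1 [hx]
      rw [hy]
      simp only [Matrix.mulVec_add, Matrix.mulVec_smul, Matrix.mulVec_sub, Matrix.mulVec_neg,
        smul_add, smul_sub, smul_smul, neg_smul, smul_neg]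
      module
    have hxx : x' = xstar := by
      have h1 := congrArg (fun v => M⁻¹.mulVec v) hx'eq
      have h2 := congrArg (fun v => M⁻¹.mulVec v) hMx
      simp only [Matrix.mulVec_mulVec, Matrix.nonsing_inv_mul M hdetM, Matrix.one_mulVec] at h1 h2
      rw [h1, h2]
    refine ⟨hxx, ?_⟩
    rw [hy, hxx, ← hii]
  · rintro ⟨hx, hy⟩
    subst hx; subst hy
    exact ⟨hi, hii⟩
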